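/- Let u : ℝ² → ℝ be twice continuously differentiable. Then for every x ∈ ℝ², lim_{δ→0⁺} (3/(2δ⁴)) ∫_{{y : |y−x|_∞ ≤ δ}} (u(x) − u(y)) dy = −Δu(x), i.e., the scaled constant-kernel nonlocal operator with infinity-norm ball truncation converges pointwise to the classical negative Laplacian as the horizon δ vanishes. -/

import Mathlib

open MeasureTheory Filter

set_option maxHeartbeats 1000000

noncomputable abbrev EE := Fin 2 → ℝ

-- Fubini for Fin 2 pi
theorem fubini2 (a b : ℝ) (f g : ℝ → ℝ) :
    ∫ h in Set.univ.pi (fun _ : Fin 2 => Set.Icc a b), f (h 0) * g (h 1)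
      = (∫ t in Set.Icc a b, f t) * (∫ t in Set.Icc a b, g t) := by
  rw [← setIntegral_prod_mul]
  have hmp := volume_preserving_piFinTwo (fun _ : Fin 2 => ℝ)
  have h2 := hmp.setIntegral_preimage_emb
    (MeasurableEquiv.piFinTwo (fun _ : Fin 2 => ℝ)).measurableEmbedding
    (fun p : ℝ × ℝ => f p.1 * g p.2) (Set.Icc a b ×ˢ Set.Icc a b)
  have hset : (⇑(MeasurableEquiv.piFinTwo (fun _ : Fin 2 => ℝ))) ⁻¹' (Set.Icc a b ×ˢ Set.Icc a b)
      = Set.univ.pi (fun _ : Fin 2 => Set.Icc a b) := by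
    ext h
    simp [MeasurableEquiv.piFinTwo_apply, Set.mem_pi, Fin.forall_fin_two, Pi.le_def]
  rw [hset] at h2
  rw [show (volume.prod volume : Measure (ℝ × ℝ)) = volume from (Measure.volume_eq_prod ℝ ℝ).symm,
    ← h2]
  rfl

theorem int1d_one (δ : ℝ) (hδ : 0 ≤ δ) : ∫ _ in Set.Icc (-δ) δ, (1:ℝ) = 2 * δ := by
  simp [Real.volume_Icc]
  rw [max_eq_left (by linarith)]
  ring

theorem int1d_id (δ : ℝ) (hδ : 0 ≤ δ) : ∫ t in Set.Icc (-δ) δ, t = 0 := by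
  rw [MeasureTheory.integral_Icc_eq_integral_Ioc,
    ← intervalIntegral.integral_of_le (by linarith : -δ ≤ δ)]
  simp

theorem int1d_sq (δ : ℝ) (hδ : 0 ≤ δ) : ∫ t in Set.Icc (-δ) δ, t * t = 2 / 3 * δ ^ 3 := by
  rw [MeasureTheory.integral_Icc_eq_integral_Ioc,
    ← intervalIntegral.integral_of_le (by linarith : -δ ≤ δ)]
  have : ∀ t : ℝ, t * t = t ^ 2 := fun t => (sq t).symm
  simp_rw [this]
  rw [integral_pow]
  ring

-- Second order Taylor estimate
theorem taylor2 (u : EE → ℝ) (hu : ContDiff ℝ 2 u) (x : EE) {ε : ℝ} (hε : 0 < ε) :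
    ∃ r > 0, ∀ h : EE, ‖h‖ ≤ r →
      |u (x + h) - u x - fderiv ℝ u x h - 1 / 2 * fderiv ℝ (fderiv ℝ u) x h h| ≤ ε * ‖h‖ ^ 2 := by
  have hdu : Differentiable ℝ u := hu.differentiable (by simp)
  have hC1 : ContDiff ℝ 1 (fderiv ℝ u) := hu.fderiv_right (m := 1) (by norm_num)
  set B := fderiv ℝ (fderiv ℝ u) x with hBdef
  have hB : HasFDerivAt (fderiv ℝ u) B x := (hC1.differentiable (by simp) x).hasFDerivAt
  have hsymm : ∀ v w, B v w = B w v :=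
    second_derivative_symmetric (fun y => (hdu y).hasFDerivAt) hB
  have hlo := (hasFDerivAt_iff_isLittleO_nhds_zero.1 hB)
  have hev : ∀ᶠ z in nhds (0 : EE), ‖fderiv ℝ u (x + z) - fderiv ℝ u x - B z‖ ≤ ε * ‖z‖ :=
    hlo.def hε
  obtain ⟨r', hr', hball⟩ := Metric.eventually_nhds_iff.1 hev
  refine ⟨r' / 2, by positivity, fun h hh => ?_⟩
  set g : EE → ℝ := fun z => u (x + z) - u x - fderiv ℝ u x z - 1 / 2 * B z z with hg
  have hgd : ∀ z : EE, HasFDerivAt g (fderiv ℝ u (x + z) - fderiv ℝ u x - B z) z := by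
    intro z
    have h1 : HasFDerivAt (fun z : EE => u (x + z)) (fderiv ℝ u (x + z)) z := by
      have := ((hdu (x + z)).hasFDerivAt).comp z ((hasFDerivAt_id z).const_add x)
      simpa [Function.comp_def] using this
    have h2 : HasFDerivAt (fun z : EE => fderiv ℝ u x z) (fderiv ℝ u x) z :=
      (fderiv ℝ u x).hasFDerivAt
    have hbb : IsBoundedBilinearMap ℝ (fun p : EE × EE => B p.1 p.2) := B.isBoundedBilinearMap
    have hd : HasFDerivAt (fun w : EE => (w, w))
        ((ContinuousLinearMap.id ℝ EE).prod (ContinuousLinearMap.id ℝ EE)) z :=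
      (hasFDerivAt_id z).prodMk (hasFDerivAt_id z)
    have h3p := HasFDerivAt.comp (f := fun w : EE => (w, w)) z (hbb.hasFDerivAt (z, z)) hd
    have h3 : HasFDerivAt (fun z : EE => B z z)
        ((hbb.deriv (z, z)).comp ((ContinuousLinearMap.id ℝ EE).prod (ContinuousLinearMap.id ℝ EE))) z := h3p
    have h4 : HasFDerivAt (fun z : EE => 1 / 2 * B z z)
        ((1 / 2 : ℝ) • ((hbb.deriv (z, z)).comp ((ContinuousLinearMap.id ℝ EE).prod (ContinuousLinearMap.id ℝ EE)))) z :=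
      h3.const_mul (1 / 2)
    have h1' : HasFDerivAt (fun z : EE => u (x + z) - u x) (fderiv ℝ u (x + z)) z :=
      h1.sub_const (u x)
    have := (h1'.sub h2).sub h4
    refine this.congr_fderiv ?_
    ext w
    simp [hbb, IsBoundedBilinearMap.deriv_apply, hsymm w z]
    ring
  have key : ‖g h - g 0‖ ≤ ε * ‖h‖ * ‖h - 0‖ := by
    apply Convex.norm_image_sub_le_of_norm_hasFDerivWithin_le
      (fun z hz => (hgd z).hasFDerivWithinAt) _ (convex_closedBall (0 : EE) ‖h‖)
      (Metric.mem_closedBall_self (norm_nonneg h)) _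
    · intro z hz
      have hz' : ‖z‖ ≤ ‖h‖ := by simpa using hz
      have : ‖fderiv ℝ u (x + z) - fderiv ℝ u x - B z‖ ≤ ε * ‖z‖ := by
        apply hball
        simp only [dist_zero_right]
        calc ‖z‖ ≤ ‖h‖ := hz'
          _ ≤ r' / 2 := hh
          _ < r' := by linarith
      exact this.trans (by nlinarith [norm_nonneg z, norm_nonneg h])
    · simpa using Metric.mem_closedBall_self (norm_nonneg h)
  have hg0 : g 0 = 0 := by simp [hg]
  rw [hg0, sub_zero, sub_zero] at key
  calc |u (x + h) - u x - fderiv ℝ u x h - 1 / 2 * B h h| = ‖g h‖ := by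
        rw [Real.norm_eq_abs]
    _ ≤ ε * ‖h‖ * ‖h‖ := key
    _ = ε * ‖h‖ ^ 2 := by ring
/-- The Laplacian on `ℝ² = Fin 2 → ℝ` (equipped with the sup norm),
as a sum of second directional derivatives. -/
noncomputable def laplacianPi (u : (Fin 2 → ℝ) → ℝ) (x : Fin 2 → ℝ) : ℝ :=
  ∑ i : Fin 2, fderiv ℝ (fun z => fderiv ℝ u z (Pi.single i 1)) x (Pi.single i 1)

theorem lap_eq (u : EE → ℝ) (hu : ContDiff ℝ 2 u) (x : EE) :
    laplacianPi u x = fderiv ℝ (fderiv ℝ u) x (Pi.single 0 1) (Pi.single 0 1)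
      + fderiv ℝ (fderiv ℝ u) x (Pi.single 1 1) (Pi.single 1 1) := by
  have hC1 : ContDiff ℝ 1 (fderiv ℝ u) := hu.fderiv_right (m := 1) (by norm_num)
  have hB : HasFDerivAt (fderiv ℝ u) (fderiv ℝ (fderiv ℝ u) x) x :=
    (hC1.differentiable (by simp) x).hasFDerivAt
  have hfd : ∀ v w : EE, fderiv ℝ (fun z => fderiv ℝ u z v) x w
      = fderiv ℝ (fderiv ℝ u) x w v := by
    intro v w
    have hcomp := HasFDerivAt.comp (f := fderiv ℝ u) x
      ((ContinuousLinearMap.apply ℝ ℝ v).hasFDerivAt) hB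
    have h2 : HasFDerivAt (fun z => fderiv ℝ u z v)
        ((ContinuousLinearMap.apply ℝ ℝ v).comp (fderiv ℝ (fderiv ℝ u) x)) x := hcomp
    rw [h2.fderiv]
    rfl
  rw [laplacianPi, Fin.sum_univ_two, hfd, hfd]

/-- for `u ∈ C²`, the scaled constant-kernel nonlocal operator with
infinity-norm ball truncation converges pointwise to the classical negative Laplacian
as the horizon `δ → 0⁺`.  Here `dist` on `Fin 2 → ℝ` is the sup distance, so
`{y | dist y x ≤ δ}` is the infinity-norm ball `B_δ^∞(x)`. -/
theorem infinity_ball_local_limit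
    (u : (Fin 2 → ℝ) → ℝ) (hu : ContDiff ℝ 2 u) (x : Fin 2 → ℝ) :
    Tendsto (fun δ : ℝ =>
        3 / (2 * δ ^ 4) * ∫ y in {y : Fin 2 → ℝ | dist y x ≤ δ}, (u x - u y))
      (nhdsWithin 0 (Set.Ioi 0)) (nhds (- laplacianPi u x)) := by
  set L := fderiv ℝ u x with hLdef
  set B := fderiv ℝ (fderiv ℝ u) x with hBdef
  set g : EE → ℝ := fun h => u (x + h) - u x - L h - 1 / 2 * B h h with hgdef
  have hBB : Continuous fun h : EE => B h h :=
    B.isBoundedBilinearMap.continuous.comp (continuous_id.prodMk continuous_id)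
  have hgcont : Continuous g := by
    refine (((hu.continuous.comp (continuous_const.add continuous_id)).sub
      continuous_const).sub L.continuous).sub (continuous_const.mul hBB)
  rw [Metric.tendsto_nhdsWithin_nhds]
  intro ε hε
  obtain ⟨r, hr, htay⟩ := taylor2 u hu x (ε := ε / 12) (by positivity)
  refine ⟨r, hr, ?_⟩
  intro δ hδmem hδr
  have hδ : 0 < δ := hδmem
  have hδr' : δ ≤ r := by
    rw [Real.dist_eq, sub_zero, abs_of_pos hδ] at hδr; exact hδr.le
  set sδ : Set EE := Set.univ.pi (fun _ : Fin 2 => Set.Icc (-δ) δ) with hsδdef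
  have hsδ : MeasurableSet sδ := MeasurableSet.univ_pi (fun _ => measurableSet_Icc)
  have hcomp : IsCompact sδ := isCompact_univ_pi (fun _ => isCompact_Icc)
  have hvol : volume sδ < ⊤ := hcomp.measure_lt_top
  have intc : ∀ F : EE → ℝ, Continuous F → IntegrableOn F sδ := fun F hF =>
    hF.continuousOn.integrableOn_compact hcomp
  have hS : MeasurableSet {y : EE | dist y x ≤ δ} := measurableSet_closedBall
  have hmem : ∀ h : EE, h ∈ sδ ↔ dist (h + x) x ≤ δ := by
    intro h
    rw [dist_eq_norm, add_sub_cancel_right, pi_norm_le_iff_of_nonneg hδ.le]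
    simp [hsδdef, Set.mem_univ_pi, Real.norm_eq_abs, abs_le, Pi.le_def, forall_and]
  -- translation
  have htrans : (∫ y in {y : EE | dist y x ≤ δ}, (u x - u y))
      = ∫ h in sδ, (u x - u (h + x)) := by
    rw [← integral_indicator hS, ← integral_indicator hsδ]
    rw [← integral_add_right_eq_self
      (Set.indicator {y : EE | dist y x ≤ δ} (fun y => u x - u y)) x]
    congr 1
    funext h
    by_cases hm : h ∈ sδ
    · have hm' : (h + x) ∈ {y : EE | dist y x ≤ δ} := (hmem h).1 hm
      rw [Set.indicator_of_mem hm', Set.indicator_of_mem hm]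
    · have hm' : (h + x) ∉ {y : EE | dist y x ≤ δ} := fun hc => hm ((hmem h).2 hc)
      rw [Set.indicator_of_notMem hm', Set.indicator_of_notMem hm]
  -- pointwise expansion
  have hh : ∀ h : EE, h = h 0 • (Pi.single 0 1 : EE) + h 1 • (Pi.single 1 1 : EE) := by
    intro h; funext i; fin_cases i <;> simp
  have hLh : ∀ h : EE, L h = L (Pi.single 0 1) * h 0 + L (Pi.single 1 1) * h 1 := by
    intro h
    conv_lhs => rw [hh h]
    simp only [map_add, _root_.map_smul, smul_eq_mul]
    ring
  have hBh : ∀ h : EE, B h h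
      = B (Pi.single 0 1) (Pi.single 0 1) * (h 0 * h 0)
      + (B (Pi.single 0 1) (Pi.single 1 1) + B (Pi.single 1 1) (Pi.single 0 1)) * (h 0 * h 1)
      + B (Pi.single 1 1) (Pi.single 1 1) * (h 1 * h 1) := by
    intro h
    conv_lhs => rw [hh h]
    simp only [map_add, _root_.map_smul, ContinuousLinearMap.add_apply,
      ContinuousLinearMap.coe_smul', Pi.smul_apply, smul_eq_mul]
    ring
  have hpt : ∀ h : EE, u x - u (h + x) =
      (-(L (Pi.single 0 1))) * h 0 + (-(L (Pi.single 1 1))) * h 1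
      + (-(1/2) * B (Pi.single 0 1) (Pi.single 0 1)) * (h 0 * h 0)
      + (-(1/2) * (B (Pi.single 0 1) (Pi.single 1 1) + B (Pi.single 1 1) (Pi.single 0 1)))
          * (h 0 * h 1)
      + (-(1/2) * B (Pi.single 1 1) (Pi.single 1 1)) * (h 1 * h 1)
      + (- g h) := by
    intro h
    have hgh : g h = u (x + h) - u x - L h - 1 / 2 * B h h := rfl
    rw [add_comm h x, hgh, hLh h, hBh h]
    ring
  -- integrability of pieces
  have i1 : IntegrableOn (fun h : EE => (-(L (Pi.single 0 1))) * h 0) sδ :=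
    intc _ (continuous_const.mul (continuous_apply 0))
  have i2 : IntegrableOn (fun h : EE => (-(L (Pi.single 1 1))) * h 1) sδ :=
    intc _ (continuous_const.mul (continuous_apply 1))
  have i3 : IntegrableOn (fun h : EE =>
      (-(1/2) * B (Pi.single 0 1) (Pi.single 0 1)) * (h 0 * h 0)) sδ :=
    intc _ (continuous_const.mul ((continuous_apply 0).mul (continuous_apply 0)))
  have i4 : IntegrableOn (fun h : EE =>
      (-(1/2) * (B (Pi.single 0 1) (Pi.single 1 1) + B (Pi.single 1 1) (Pi.single 0 1)))
        * (h 0 * h 1)) sδ :=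
    intc _ (continuous_const.mul ((continuous_apply 0).mul (continuous_apply 1)))
  have i5 : IntegrableOn (fun h : EE =>
      (-(1/2) * B (Pi.single 1 1) (Pi.single 1 1)) * (h 1 * h 1)) sδ :=
    intc _ (continuous_const.mul ((continuous_apply 1).mul (continuous_apply 1)))
  have i6 : IntegrableOn (fun h : EE => - g h) sδ := intc _ hgcont.neg
  have i12 : IntegrableOn (fun h : EE =>
      (-(L (Pi.single 0 1))) * h 0 + (-(L (Pi.single 1 1))) * h 1) sδ := i1.add i2
  have i13 : IntegrableOn (fun h : EE =>
      (-(L (Pi.single 0 1))) * h 0 + (-(L (Pi.single 1 1))) * h 1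
      + (-(1/2) * B (Pi.single 0 1) (Pi.single 0 1)) * (h 0 * h 0)) sδ := i12.add i3
  have i14 : IntegrableOn (fun h : EE =>
      (-(L (Pi.single 0 1))) * h 0 + (-(L (Pi.single 1 1))) * h 1
      + (-(1/2) * B (Pi.single 0 1) (Pi.single 0 1)) * (h 0 * h 0)
      + (-(1/2) * (B (Pi.single 0 1) (Pi.single 1 1) + B (Pi.single 1 1) (Pi.single 0 1)))
          * (h 0 * h 1)) sδ := i13.add i4
  have i15 : IntegrableOn (fun h : EE =>
      (-(L (Pi.single 0 1))) * h 0 + (-(L (Pi.single 1 1))) * h 1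
      + (-(1/2) * B (Pi.single 0 1) (Pi.single 0 1)) * (h 0 * h 0)
      + (-(1/2) * (B (Pi.single 0 1) (Pi.single 1 1) + B (Pi.single 1 1) (Pi.single 0 1)))
          * (h 0 * h 1)
      + (-(1/2) * B (Pi.single 1 1) (Pi.single 1 1)) * (h 1 * h 1)) sδ := i14.add i5
  -- the elementary integrals
  have e01 : (∫ h in sδ, h 0) = 0 := by
    have hf := fubini2 (-δ) δ (fun t => t) (fun _ => 1)
    simp only [mul_one] at hf
    rw [hsδdef, hf, int1d_id δ hδ.le, zero_mul]
  have e02 : (∫ h in sδ, h 1) = 0 := by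
    have hf := fubini2 (-δ) δ (fun _ => 1) (fun t => t)
    simp only [one_mul] at hf
    rw [hsδdef, hf, int1d_id δ hδ.le, mul_zero]
  have esq0 : (∫ h in sδ, h 0 * h 0) = 2/3*δ^3 * (2*δ) := by
    have hf := fubini2 (-δ) δ (fun t => t * t) (fun _ => 1)
    simp only [mul_one] at hf
    rw [hsδdef, hf, int1d_sq δ hδ.le, int1d_one δ hδ.le]
  have esq1 : (∫ h in sδ, h 1 * h 1) = (2*δ) * (2/3*δ^3) := by
    have hf := fubini2 (-δ) δ (fun _ => 1) (fun t => t * t)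
    simp only [one_mul] at hf
    rw [hsδdef, hf, int1d_sq δ hδ.le, int1d_one δ hδ.le]
  have ecross : (∫ h in sδ, h 0 * h 1) = 0 := by
    have hf := fubini2 (-δ) δ (fun t => t) (fun t => t)
    rw [hsδdef, hf, int1d_id δ hδ.le, zero_mul]
  -- value of the integral
  have Ival : (∫ h in sδ, (u x - u (h + x)))
      = -(2/3*δ^4) * (B (Pi.single 0 1) (Pi.single 0 1) + B (Pi.single 1 1) (Pi.single 1 1))
        - ∫ h in sδ, g h := by
    rw [setIntegral_congr_fun hsδ (fun h _ => hpt h)]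
    rw [integral_add i15 i6, integral_add i14 i5, integral_add i13 i4,
      integral_add i12 i3, integral_add i1 i2]
    rw [integral_const_mul, integral_const_mul, integral_const_mul, integral_const_mul,
      integral_const_mul, integral_neg]
    rw [e01, e02, esq0, esq1, ecross]
    ring
  -- volume of the box
  have hvolr : (volume sδ).toReal = (2*δ)*(2*δ) := by
    rw [hsδdef, volume_pi_pi]
    simp only [Real.volume_Icc, sub_neg_eq_add, Finset.prod_const, Finset.card_univ,
      Fintype.card_fin]
    rw [ENNReal.toReal_pow, ENNReal.toReal_ofReal (by linarith)]
    ring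
  -- bound on the remainder
  have hgb : ∀ h ∈ sδ, ‖g h‖ ≤ ε/12 * δ^2 := by
    intro h hm
    have hn : ‖h‖ ≤ δ := by
      rw [pi_norm_le_iff_of_nonneg hδ.le]
      intro i
      rw [hsδdef, Set.mem_univ_pi] at hm
      have := hm i
      rw [Set.mem_Icc] at this
      rw [Real.norm_eq_abs, abs_le]
      exact this
    have ht := htay h (hn.trans hδr')
    have hgh : g h = u (x + h) - u x - fderiv ℝ u x h
        - 1 / 2 * fderiv ℝ (fderiv ℝ u) x h h := rfl
    rw [Real.norm_eq_abs, hgh]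
    refine ht.trans ?_
    have : ‖h‖^2 ≤ δ^2 := by nlinarith [norm_nonneg h]
    nlinarith [hε]
  have hib : |∫ h in sδ, g h| ≤ ε/12 * δ^2 * ((2*δ)*(2*δ)) := by
    have hb := norm_setIntegral_le_of_norm_le_const hvol hgb
    rw [measureReal_def, hvolr, Real.norm_eq_abs] at hb
    exact hb
  -- conclusion
  rw [htrans, Ival, lap_eq u hu x, Real.dist_eq]
  have hδ4 : (δ:ℝ)^4 ≠ 0 := by positivity
  have hrw : 3 / (2 * δ ^ 4) *
      (-(2/3*δ^4) * (B (Pi.single 0 1) (Pi.single 0 1) + B (Pi.single 1 1) (Pi.single 1 1))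
        - ∫ h in sδ, g h)
      - -(B (Pi.single 0 1) (Pi.single 0 1) + B (Pi.single 1 1) (Pi.single 1 1))
      = (-(3 / (2 * δ ^ 4))) * ∫ h in sδ, g h := by
    field_simp
    ring
  rw [hrw, abs_mul, abs_neg, abs_of_pos (by positivity : (0:ℝ) < 3 / (2 * δ ^ 4))]
  have : 3 / (2 * δ ^ 4) * |∫ h in sδ, g h| ≤ 3 / (2 * δ ^ 4) * (ε/12 * δ^2 * ((2*δ)*(2*δ))) :=
    mul_le_mul_of_nonneg_left hib (by positivity)
  refine this.trans_lt ?_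
  have heq : 3 / (2 * δ ^ 4) * (ε/12 * δ^2 * ((2*δ)*(2*δ))) = ε/2 := by
    field_simp
    ring
  rw [heq]
  linarith
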